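/- Let m > s ≥ 0 be integers and M > 0. Then there exist constants 0 < C₁ ≤ C₂ such that for every integer σ ≥ 1, C₁^σ (σ!)^{(m+1)/(s+1)} ≤ ∫₀^∞ ρ^{(m+1)σ} e^{−M ρ^{s+1}} dρ ≤ C₂^σ (σ!)^{(m+1)/(s+1)}. -/
import Mathlib
open Real Set MeasureTheory

lemma aux_npow_le (n : ℕ) : (n:ℝ) ^ n ≤ n.factorial * Real.exp n := by
  have h := Real.sum_le_exp_of_nonneg (x := (n:ℝ)) (Nat.cast_nonneg n) (n+1)
  have h2 : (n:ℝ) ^ n / n.factorial ≤ ∑ i ∈ Finset.range (n+1), (n:ℝ) ^ i / i.factorial :=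
    Finset.single_le_sum (f := fun i => (n:ℝ) ^ i / i.factorial)
      (fun i _ => by positivity) (Finset.self_mem_range_succ n)
  have h3 : (n:ℝ) ^ n / n.factorial ≤ Real.exp n := h2.trans h
  have hf : (0:ℝ) < n.factorial := by exact_mod_cast n.factorial_pos
  calc (n:ℝ) ^ n = (n:ℝ) ^ n / n.factorial * n.factorial := by field_simp
    _ ≤ Real.exp n * n.factorial := by gcongr
    _ = n.factorial * Real.exp n := mul_comm _ _

lemma aux_gamma_upper {x : ℝ} (hx : 1 ≤ x) : Real.Gamma x ≤ (x+2) ^ (x+2 : ℝ) := by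
  have hx0 : 0 < x := lt_of_lt_of_le one_pos hx
  have hG : Real.Gamma (x+2) = (x+1) * (x * Real.Gamma x) := by
    rw [show x + 2 = (x+1) + 1 by ring, Real.Gamma_add_one (by linarith),
      Real.Gamma_add_one (by linarith)]
  set n : ℕ := ⌈x⌉₊ with hn
  have hxn : x ≤ n := Nat.le_ceil x
  have hnx : (n:ℝ) < x + 1 := Nat.ceil_lt_add_one hx0.le
  have h1 : Real.Gamma (x+2) ≤ Real.Gamma ((n:ℝ)+2) := by
    rcases eq_or_lt_of_le (by linarith : x + 2 ≤ (n:ℝ) + 2) with h | h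
    · rw [h]
    · exact le_of_lt (Real.Gamma_strictMonoOn_Ici (by simp only [Set.mem_Ici]; linarith)
        (by simp only [Set.mem_Ici]; linarith) h)
  have h2 : Real.Gamma ((n:ℝ)+2) = (n+1).factorial := by
    rw [show ((n:ℝ)+2) = ((n+1:ℕ):ℝ) + 1 by push_cast; ring, Real.Gamma_nat_eq_factorial]
  have h3 : ((n+1).factorial : ℝ) ≤ ((n+1:ℕ):ℝ) ^ ((n+1:ℕ):ℝ) := by
    rw [Real.rpow_natCast]
    exact_mod_cast Nat.factorial_le_pow (n+1)
  have h4 : ((n+1:ℕ):ℝ) ^ ((n+1:ℕ):ℝ) ≤ (x+2) ^ (x+2:ℝ) := by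
    have hb : ((n+1:ℕ):ℝ) ≤ x + 2 := by push_cast; linarith
    calc ((n+1:ℕ):ℝ) ^ ((n+1:ℕ):ℝ) ≤ (x+2) ^ ((n+1:ℕ):ℝ) :=
          Real.rpow_le_rpow (by positivity) hb (by positivity)
      _ ≤ (x+2) ^ (x+2:ℝ) := Real.rpow_le_rpow_of_exponent_le (by linarith) hb
  have hpos := Real.Gamma_pos_of_pos hx0
  have hkey : Real.Gamma x ≤ (x+1) * (x * Real.Gamma x) := by
    have h1x : (1:ℝ) ≤ (x+1)*x := by nlinarith
    calc Real.Gamma x = 1 * Real.Gamma x := (one_mul _).symm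
      _ ≤ ((x+1)*x) * Real.Gamma x := mul_le_mul_of_nonneg_right h1x hpos.le
      _ = (x+1) * (x * Real.Gamma x) := mul_assoc _ _ _
  linarith [h1.trans (h2.le.trans (h3.trans h4))]

lemma aux_gamma_lower {x : ℝ} (hx : 1 ≤ x) :
    x ^ (x:ℝ) * Real.exp (-(x+1)) / (x+2)^2 ≤ Real.Gamma x := by
  have hx0 : 0 < x := lt_of_lt_of_le one_pos hx
  have hG : Real.Gamma (x+2) = (x+1) * (x * Real.Gamma x) := by
    rw [show x + 2 = (x+1) + 1 by ring, Real.Gamma_add_one (by linarith),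
      Real.Gamma_add_one (by linarith)]
  set n : ℕ := ⌈x⌉₊ with hn
  have hxn : x ≤ n := Nat.le_ceil x
  have hnx : (n:ℝ) < x + 1 := Nat.ceil_lt_add_one hx0.le
  have hn1 : 1 ≤ n := Nat.one_le_ceil_iff.mpr hx0
  have hn1' : (1:ℝ) ≤ n := by exact_mod_cast hn1
  have h1 : Real.Gamma ((n:ℝ)+1) ≤ Real.Gamma (x+2) := by
    rcases eq_or_lt_of_le (by linarith : (n:ℝ) + 1 ≤ x + 2) with h | h
    · rw [h]
    · exact le_of_lt (Real.Gamma_strictMonoOn_Ici (by simp only [Set.mem_Ici]; linarith)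
        (by simp only [Set.mem_Ici]; linarith) h)
  have h2 : Real.Gamma ((n:ℝ)+1) = n.factorial := Real.Gamma_nat_eq_factorial n
  have h3 : x ^ (x:ℝ) * Real.exp (-(x+1)) ≤ (n.factorial : ℝ) := by
    have hxx : x ^ (x:ℝ) ≤ (n:ℝ) ^ (n:ℕ) := by
      rw [← Real.rpow_natCast (n:ℝ) n]
      calc x ^ (x:ℝ) ≤ (n:ℝ) ^ (x:ℝ) := Real.rpow_le_rpow hx0.le hxn (by linarith)
        _ ≤ (n:ℝ) ^ ((n:ℕ):ℝ) := Real.rpow_le_rpow_of_exponent_le hn1' hxn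
    have : x ^ (x:ℝ) ≤ n.factorial * Real.exp (x+1) := by
      calc x ^ (x:ℝ) ≤ (n:ℝ) ^ (n:ℕ) := hxx
        _ ≤ n.factorial * Real.exp n := aux_npow_le n
        _ ≤ n.factorial * Real.exp (x+1) := by
            have h0 : (0:ℝ) ≤ n.factorial := by positivity
            exact mul_le_mul_of_nonneg_left (Real.exp_le_exp.mpr (by linarith)) h0
    calc x ^ (x:ℝ) * Real.exp (-(x+1)) ≤ (n.factorial * Real.exp (x+1)) * Real.exp (-(x+1)) := by
          gcongr
      _ = n.factorial := by
          rw [mul_assoc, ← Real.exp_add, show x + 1 + -(x+1) = 0 by ring, Real.exp_zero, mul_one]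
  have hpos := Real.Gamma_pos_of_pos hx0
  have hL : x ^ (x:ℝ) * Real.exp (-(x+1)) ≤ (x+1) * (x * Real.Gamma x) := by
    rw [← hG]; exact h3.trans (h2 ▸ h1)
  rw [div_le_iff₀ (by positivity)]
  nlinarith [hL, mul_pos hpos (show (0:ℝ) < 3*x+4 by linarith)]

lemma aux_exp_pow (y : ℝ) (n : ℕ) : (Real.exp y) ^ n = Real.exp (n * y) := by
  rw [← Real.rpow_natCast (Real.exp y) n, ← Real.exp_mul, mul_comm]

lemma aux_one_le_mul {x y : ℝ} (hx : 1 ≤ x) (hy : 1 ≤ y) : 1 ≤ x * y := by nlinarith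

lemma aux_mul_le_one {x y : ℝ} (hx0 : 0 ≤ x) (hx : x ≤ 1) (hy0 : 0 ≤ y) (hy : y ≤ 1) :
    x * y ≤ 1 := by nlinarith

set_option maxHeartbeats 4000000 in
theorem stmt14 (m s : ℕ) (hms : s < m) (M : ℝ) (hM : 0 < M) :
    ∃ C₁ C₂ : ℝ, 0 < C₁ ∧ C₁ ≤ C₂ ∧
      ∀ σ : ℕ, 1 ≤ σ →
        C₁ ^ σ * (Nat.factorial σ : ℝ) ^ (((m : ℝ) + 1) / ((s : ℝ) + 1)) ≤
            ∫ ρ in Set.Ioi (0 : ℝ), ρ ^ ((m + 1) * σ) * Real.exp (-M * ρ ^ (s + 1)) ∧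
          (∫ ρ in Set.Ioi (0 : ℝ), ρ ^ ((m + 1) * σ) * Real.exp (-M * ρ ^ (s + 1))) ≤
            C₂ ^ σ * (Nat.factorial σ : ℝ) ^ (((m : ℝ) + 1) / ((s : ℝ) + 1)) := by
  set p : ℝ := (s:ℝ) + 1 with hpdef
  set a : ℝ := ((m:ℝ) + 1) / p with hadef
  have hp : 0 < p := by positivity
  have hp1 : 1 ≤ p := by simp only [hpdef]; have : (0:ℝ) ≤ s := Nat.cast_nonneg s; linarith
  have hsm : (s:ℝ) + 1 ≤ (m:ℝ) + 1 := by
    have : (s:ℝ) ≤ m := Nat.cast_le.mpr hms.le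
    linarith
  have ha1 : 1 ≤ a := by
    rw [hadef, le_div_iff₀ hp, one_mul, hpdef]; exact hsm
  have ha0 : 0 < a := lt_of_lt_of_le one_pos ha1
  set B : ℝ := max M⁻¹ 1 with hBdef
  have hB1 : 1 ≤ B := le_max_right _ _
  have hB0 : 0 < B := lt_of_lt_of_le one_pos hB1
  have hMB : M⁻¹ ≤ B := le_max_left _ _
  set b : ℝ := min M⁻¹ 1 with hbdef
  have hb0 : 0 < b := lt_min (by positivity) one_pos
  have hb1 : b ≤ 1 := min_le_right _ _
  have hbM : b ≤ M⁻¹ := min_le_left _ _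
  refine ⟨b ^ (a+1) * (1/p) * Real.exp (-(a+2)) * (1/(16*a^2)) * Real.exp (-2),
    B ^ (a+1) * (4*a) ^ a * Real.exp a * (64*a^3) * Real.exp 3, ?_, ?_, ?_⟩
  · have h1 : 0 < b ^ (a+1) := Real.rpow_pos_of_pos hb0 _
    positivity
  · have hC1le : b ^ (a+1) * (1/p) * Real.exp (-(a+2)) * (1/(16*a^2)) * Real.exp (-2) ≤ 1 := by
      have e1 : b ^ (a+1) ≤ 1 := Real.rpow_le_one hb0.le hb1 (by linarith)
      have e2 : 1/p ≤ 1 := by rw [div_le_one hp]; exact hp1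
      have e3 : Real.exp (-(a+2)) ≤ 1 := Real.exp_le_one_iff.mpr (by linarith)
      have e4 : 1/(16*a^2) ≤ 1 := by rw [div_le_one (by positivity)]; nlinarith
      have e5 : Real.exp (-2:ℝ) ≤ 1 := Real.exp_le_one_iff.mpr (by norm_num)
      have h1 : 0 < b ^ (a+1) := Real.rpow_pos_of_pos hb0 _
      have p2 : (0:ℝ) ≤ 1/p := by positivity
      have p3 : (0:ℝ) ≤ Real.exp (-(a+2)) := (Real.exp_pos _).le
      have p4 : (0:ℝ) ≤ 1/(16*a^2) := by positivity
      have p5 : (0:ℝ) ≤ Real.exp (-2:ℝ) := (Real.exp_pos _).le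
      exact aux_mul_le_one (by positivity)
        (aux_mul_le_one (by positivity) (aux_mul_le_one (by positivity)
          (aux_mul_le_one h1.le e1 p2 e2) p3 e3) p4 e4) p5 e5
    have hC2ge : 1 ≤ B ^ (a+1) * (4*a) ^ a * Real.exp a * (64*a^3) * Real.exp 3 := by
      have e1 : 1 ≤ B ^ (a+1) := Real.one_le_rpow hB1 (by linarith)
      have e2 : 1 ≤ (4*a) ^ a := Real.one_le_rpow (by linarith) ha0.le
      have e3 : 1 ≤ Real.exp a := Real.one_le_exp ha0.le
      have e4 : 1 ≤ 64*a^3 := by nlinarith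
      have e5 : 1 ≤ Real.exp (3:ℝ) := Real.one_le_exp (by norm_num)
      exact aux_one_le_mul (aux_one_le_mul (aux_one_le_mul (aux_one_le_mul e1 e2) e3) e4) e5
    linarith
  · intro σ hσ
    have hσ0 : σ ≠ 0 := by omega
    have hσv1 : (1:ℝ) ≤ (σ:ℝ) := by exact_mod_cast hσ
    set σv : ℝ := (σ:ℝ) with hσvdef
    set u : ℝ := a * σv with hudef
    have hu1 : 1 ≤ u := by rw [hudef]; nlinarith
    have hpinv1 : 1/p ≤ 1 := by rw [div_le_one hp]; exact hp1
    have hpinv0 : 0 < 1/p := by positivity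
    set x : ℝ := ((((m+1)*σ : ℕ) : ℝ) + 1)/p with hxdef
    have hxu : x = u + 1/p := by
      rw [hxdef, hudef, hadef, hσvdef]
      push_cast
      field_simp
    have hxlb : u ≤ x := by rw [hxu]; linarith
    have hxub : x ≤ u + 1 := by rw [hxu]; linarith
    have hx1 : (1:ℝ) ≤ x := by linarith
    have hx0 : (0:ℝ) < x := by linarith
    have hxa1 : x ≤ (a+1)*σv := by
      have : u + 1 ≤ (a+1)*σv := by rw [hudef]; nlinarith
      linarith
    have hq : (-1:ℝ) < (((m+1)*σ : ℕ) : ℝ) :=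
      lt_of_lt_of_le neg_one_lt_zero (Nat.cast_nonneg _)
    have hI : (∫ ρ in Set.Ioi (0:ℝ), ρ ^ ((m+1)*σ) * Real.exp (-M * ρ^(s+1)))
        = M ^ (-x) * (1/p) * Real.Gamma x := by
      have hcong : (∫ ρ in Set.Ioi (0:ℝ), ρ ^ ((m+1)*σ) * Real.exp (-M * ρ^(s+1)))
          = ∫ ρ in Set.Ioi (0:ℝ), ρ ^ ((((m+1)*σ : ℕ)):ℝ) * Real.exp (-M * ρ ^ p) := by
        refine setIntegral_congr_fun measurableSet_Ioi (fun ρ hρ => ?_)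
        rw [Real.rpow_natCast]
        congr 2
        rw [hpdef, ← Real.rpow_natCast ρ (s+1)]
        push_cast
        ring
      rw [hcong, integral_rpow_mul_exp_neg_mul_rpow hp hq hM, hxdef, neg_div]
    have hfac0 : (0:ℝ) < (σ.factorial : ℝ) := by exact_mod_cast σ.factorial_pos
    have hMx : M ^ (-x) = (M⁻¹) ^ x := by
      rw [Real.rpow_neg hM.le, ← Real.inv_rpow hM.le]
    have hMxpos : (0:ℝ) ≤ M ^ (-x) := Real.rpow_nonneg hM.le _
    have hσσ : σv ^ σv = σv ^ (σ:ℕ) := by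
      rw [hσvdef]; exact Real.rpow_natCast _ σ
    constructor
    · -- lower bound
      have hL1 : (b ^ (a+1)) ^ σ ≤ M ^ (-x) := by
        rw [hMx]
        have h3 : (b ^ (a+1)) ^ σ = b ^ ((a+1)*σv) := by
          rw [Real.rpow_mul hb0.le, Real.rpow_natCast]
        rw [h3]
        calc b ^ ((a+1)*σv) ≤ b ^ x := Real.rpow_le_rpow_of_exponent_ge hb0 hb1 hxa1
          _ ≤ (M⁻¹) ^ x := Real.rpow_le_rpow hb0.le hbM (by linarith)
      have hL2 : u ^ u * Real.exp (-(u+2)) / (u+3)^2 ≤ Real.Gamma x := by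
        refine le_trans ?_ (aux_gamma_lower hx1)
        refine div_le_div₀ (by positivity) ?_ (by positivity) (by nlinarith)
        refine mul_le_mul ?_ (Real.exp_le_exp.mpr (by linarith)) (Real.exp_pos _).le
          (Real.rpow_nonneg hx0.le _)
        calc u ^ u ≤ x ^ u := Real.rpow_le_rpow (by linarith) hxlb (by linarith)
          _ ≤ x ^ x := Real.rpow_le_rpow_of_exponent_le hx1 hxlb
      have q1 : (σ.factorial:ℝ) ^ a ≤ u ^ u := by
        have f1 : (σ.factorial:ℝ) ≤ σv ^ (σ:ℕ) := by
          rw [hσvdef]; exact_mod_cast Nat.factorial_le_pow σ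
        calc (σ.factorial:ℝ) ^ a ≤ (σv ^ σv) ^ a := by
              refine Real.rpow_le_rpow (by positivity) ?_ ha0.le
              rw [hσσ]; exact f1
          _ = σv ^ u := by rw [← Real.rpow_mul (by positivity), hudef, mul_comm]
          _ ≤ u ^ u := Real.rpow_le_rpow (by positivity) (by rw [hudef]; nlinarith)
              (by linarith)
      have q2 : (Real.exp (-(a+2))) ^ σ ≤ Real.exp (-(u+2)) := by
        rw [← Real.rpow_natCast (Real.exp _) σ, ← Real.exp_mul]
        refine Real.exp_le_exp.mpr ?_
        rw [hudef, hσvdef]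
        nlinarith [hσv1, ha0]
      have q3 : (1/(16*a^2)) ^ σ * (Real.exp (-2:ℝ)) ^ σ ≤ 1/(u+3)^2 := by
        have hexpσ : σv ≤ Real.exp σv := by linarith [Real.add_one_le_exp σv]
        have d1 : (u+3)^2 ≤ 16*a^2 * Real.exp (2*σv) := by
          calc (u+3)^2 ≤ (4*u)^2 := by nlinarith
            _ = 16*a^2*σv^2 := by rw [hudef]; ring
            _ ≤ 16*a^2*(Real.exp σv)^2 := by
                refine mul_le_mul_of_nonneg_left ?_ (by positivity)
                exact pow_le_pow_left₀ (by positivity) hexpσ 2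
            _ = 16*a^2*Real.exp (2*σv) := by
                rw [aux_exp_pow]
                norm_num
        have e1 : (1/(16*a^2) : ℝ) ^ σ ≤ 1/(16*a^2) := by
          refine pow_le_of_le_one (by positivity) ?_ hσ0
          rw [div_le_one (by positivity)]; nlinarith
        have e2 : ((Real.exp (-2:ℝ)) ^ σ : ℝ) = Real.exp (-(2*σv)) := by
          rw [← Real.rpow_natCast (Real.exp _) σ, ← Real.exp_mul, hσvdef]
          ring_nf
        calc (1/(16*a^2)) ^ σ * (Real.exp (-2:ℝ)) ^ σ
            ≤ (1/(16*a^2)) * Real.exp (-(2*σv)) := by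
              rw [e2]
              exact mul_le_mul_of_nonneg_right e1 (Real.exp_pos _).le
          _ = 1/(16*a^2 * Real.exp (2*σv)) := by
              rw [Real.exp_neg, one_div, one_div, ← mul_inv]
          _ ≤ 1/(u+3)^2 := one_div_le_one_div_of_le (by positivity) d1
      have hL3 : (Real.exp (-(a+2))) ^ σ *
          ((1/(16*a^2)) ^ σ * (Real.exp (-2:ℝ)) ^ σ * (σ.factorial:ℝ) ^ a)
          ≤ u ^ u * Real.exp (-(u+2)) / (u+3)^2 := by
        have step : (Real.exp (-(a+2))) ^ σ *
            ((1/(16*a^2)) ^ σ * (Real.exp (-2:ℝ)) ^ σ * (σ.factorial:ℝ) ^ a)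
            ≤ Real.exp (-(u+2)) * (1/(u+3)^2 * u ^ u) := by
          refine mul_le_mul q2 ?_ (by positivity) (Real.exp_pos _).le
          refine mul_le_mul q3 q1 (by positivity) (by positivity)
        calc _ ≤ Real.exp (-(u+2)) * (1/(u+3)^2 * u ^ u) := step
          _ = u ^ u * Real.exp (-(u+2)) / (u+3)^2 := by ring
      calc (b ^ (a+1) * (1/p) * Real.exp (-(a+2)) * (1/(16*a^2)) * Real.exp (-2:ℝ)) ^ σ *
            (σ.factorial:ℝ) ^ a
          = (b ^ (a+1)) ^ σ * ((1/p) ^ σ * ((Real.exp (-(a+2))) ^ σ *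
              ((1/(16*a^2)) ^ σ * (Real.exp (-2:ℝ)) ^ σ * (σ.factorial:ℝ) ^ a))) := by
            simp only [mul_pow]; ring
        _ ≤ M ^ (-x) * ((1/p) * Real.Gamma x) := by
            refine mul_le_mul hL1 ?_ (by positivity) hMxpos
            refine mul_le_mul (pow_le_of_le_one hpinv0.le hpinv1 hσ0) (hL3.trans hL2)
              (by positivity) hpinv0.le
        _ = M ^ (-x) * (1/p) * Real.Gamma x := (mul_assoc _ _ _).symm
        _ = _ := hI.symm
    · -- upper bound
      have hU1 : M ^ (-x) ≤ (B ^ (a+1)) ^ σ := by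
        have h3 : B ^ ((a+1)*σv) = (B ^ (a+1)) ^ σ := by
          rw [Real.rpow_mul hB0.le, Real.rpow_natCast]
        rw [hMx, ← h3]
        calc (M⁻¹) ^ x ≤ B ^ x := Real.rpow_le_rpow (by positivity) hMB (by linarith)
          _ ≤ B ^ ((a+1)*σv) := Real.rpow_le_rpow_of_exponent_le hB1 hxa1
      have hU2 : Real.Gamma x ≤ (u+3) ^ (u+3 : ℝ) := by
        calc Real.Gamma x ≤ (x+2) ^ (x+2 : ℝ) := aux_gamma_upper hx1
          _ ≤ (u+3) ^ (x+2 : ℝ) := Real.rpow_le_rpow (by linarith) (by linarith) (by linarith)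
          _ ≤ (u+3) ^ (u+3 : ℝ) := Real.rpow_le_rpow_of_exponent_le (by linarith) (by linarith)
      have h33 : (4*u) ^ u = ((4*a) ^ a) ^ σ * σv ^ u := by
        rw [show (4*u : ℝ) = (4*a) * σv by rw [hudef]; ring,
          Real.mul_rpow (by positivity) (by positivity)]
        congr 1
        rw [hudef, Real.rpow_mul (by positivity), Real.rpow_natCast]
      have h34 : σv ^ u ≤ (σ.factorial:ℝ) ^ a * (Real.exp a) ^ σ := by
        calc σv ^ u = (σv ^ σv) ^ a := by
              rw [hudef, mul_comm a σv, Real.rpow_mul (by positivity)]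
          _ ≤ ((σ.factorial:ℝ) * Real.exp σv) ^ a := by
              refine Real.rpow_le_rpow (by positivity) ?_ ha0.le
              rw [hσσ, hσvdef]
              exact aux_npow_le σ
          _ = (σ.factorial:ℝ) ^ a * (Real.exp σv) ^ a :=
              Real.mul_rpow (by positivity) (Real.exp_pos _).le
          _ = (σ.factorial:ℝ) ^ a * (Real.exp a) ^ σ := by
              rw [← Real.exp_mul, mul_comm σv a, Real.exp_mul, Real.rpow_natCast]
      have h35 : (4*u) ^ (3:ℝ) ≤ (64*a^3) ^ σ * (Real.exp (3:ℝ)) ^ σ := by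
        have k1 : (4*u) ^ (3:ℝ) = 64 * a^3 * σv^3 := by
          rw [show (3:ℝ) = ((3:ℕ):ℝ) by norm_num, Real.rpow_natCast, hudef]; ring
        have hexpσ : σv ≤ Real.exp σv := by linarith [Real.add_one_le_exp σv]
        have k2 : σv ^ 3 ≤ ((Real.exp (3:ℝ)) ^ σ : ℝ) := by
          calc σv ^ 3 ≤ (Real.exp σv) ^ 3 := pow_le_pow_left₀ (by positivity) hexpσ 3
            _ = (Real.exp (3:ℝ)) ^ σ := by
                rw [aux_exp_pow, aux_exp_pow, hσvdef]
                push_cast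
                ring_nf
        have k3 : 64 * a^3 ≤ ((64 * a^3 : ℝ)) ^ σ := le_self_pow₀ (by nlinarith [one_le_pow₀ ha1 (n := 3)]) hσ0
        calc (4*u) ^ (3:ℝ) = 64*a^3 * σv^3 := k1
          _ ≤ (64*a^3) ^ σ * (Real.exp (3:ℝ)) ^ σ :=
              mul_le_mul k3 k2 (by positivity) (by positivity)
      have hU3 : (u+3 : ℝ) ^ (u+3 : ℝ) ≤
          ((4*a) ^ a) ^ σ * ((σ.factorial:ℝ) ^ a * (Real.exp a) ^ σ) *
            ((64*a^3) ^ σ * (Real.exp (3:ℝ)) ^ σ) := by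
        calc (u+3 : ℝ) ^ (u+3 : ℝ) ≤ (4*u) ^ (u+3 : ℝ) :=
              Real.rpow_le_rpow (by linarith) (by linarith) (by linarith)
          _ = (4*u) ^ u * (4*u) ^ (3:ℝ) := Real.rpow_add (by linarith) u 3
          _ = ((4*a) ^ a) ^ σ * σv ^ u * (4*u) ^ (3:ℝ) := by rw [h33]
          _ ≤ ((4*a) ^ a) ^ σ * ((σ.factorial:ℝ) ^ a * (Real.exp a) ^ σ) *
                ((64*a^3) ^ σ * (Real.exp (3:ℝ)) ^ σ) := by
              refine mul_le_mul ?_ h35 (Real.rpow_nonneg (by linarith) _) (by positivity)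
              exact mul_le_mul_of_nonneg_left h34 (by positivity)
      calc (∫ ρ in Set.Ioi (0:ℝ), ρ ^ ((m+1)*σ) * Real.exp (-M * ρ^(s+1)))
          = M ^ (-x) * (1/p) * Real.Gamma x := hI
        _ ≤ (B ^ (a+1)) ^ σ * 1 *
              (((4*a) ^ a) ^ σ * ((σ.factorial:ℝ) ^ a * (Real.exp a) ^ σ) *
                ((64*a^3) ^ σ * (Real.exp (3:ℝ)) ^ σ)) := by
            refine mul_le_mul (mul_le_mul hU1 hpinv1 hpinv0.le (by positivity))
              (hU2.trans hU3) (Real.Gamma_nonneg_of_nonneg (by linarith)) (by positivity)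
        _ = (B ^ (a+1) * (4*a) ^ a * Real.exp a * (64*a^3) * Real.exp 3) ^ σ *
              (σ.factorial:ℝ) ^ a := by
            simp only [mul_pow]; ring
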